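/- For any partition λ of n with parts λ_1 ≥ ... ≥ λ_k > 0, the number of standard Young tableaux of shape λ equals n! divided by the product of hook lengths: f^λ = n! / Π_{(i,j)∈λ} h_λ(i,j). -/

import Mathlib

/-- `T` is a standard Young tableau of the skew shape `l / μ`: a bijective filling of the
cells of `l` outside `μ` by the values `1, …, |l| - |μ|` (and `0` elsewhere), strictly
increasing along rows and columns. -/
def IsStdFilling (μ l : YoungDiagram) (T : ℕ × ℕ → ℕ) : Prop :=
  Set.BijOn T (↑(l.cells \ μ.cells)) (Set.Icc 1 (l.card - μ.card)) ∧
  (∀ c, c ∉ l.cells \ μ.cells → T c = 0) ∧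
  (∀ i j₁ j₂, j₁ < j₂ → (i, j₁) ∈ l.cells \ μ.cells → (i, j₂) ∈ l.cells \ μ.cells →
    T (i, j₁) < T (i, j₂)) ∧
  (∀ i₁ i₂ j, i₁ < i₂ → (i₁, j) ∈ l.cells \ μ.cells → (i₂, j) ∈ l.cells \ μ.cells →
    T (i₁, j) < T (i₂, j))

/-- The number `f^{l/μ}` of standard Young tableaux of skew shape `l / μ`
(take `μ = ⊥` for straight shapes). -/
noncomputable def sytCount (μ l : YoungDiagram) : ℕ :=
  Nat.card { T : ℕ × ℕ → ℕ // IsStdFilling μ l T }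

/-- The hook length `h_l(i,j)` of the box `(i,j)` of `l`: the number of boxes directly to
the right or directly below `(i,j)`, including `(i,j)` itself. -/
def hookLength (l : YoungDiagram) (c : ℕ × ℕ) : ℕ :=
  (l.rowLen c.1 - c.2) + (l.colLen c.2 - c.1) - 1

open Finset Nat Polynomial Lagrange

namespace HLF


def beta (l : YoungDiagram) (k i : ℕ) : ℕ := l.rowLen i + (k - 1 - i)

lemma rowLen_pos_iff {l : YoungDiagram} {i : ℕ} : 0 < l.rowLen i ↔ i < l.colLen 0 := by
  rw [← YoungDiagram.mem_iff_lt_colLen, YoungDiagram.mem_iff_lt_rowLen]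

lemma rowLen_eq_zero {l : YoungDiagram} {i : ℕ} (h : l.colLen 0 ≤ i) : l.rowLen i = 0 := by
  by_contra hne
  exact absurd (rowLen_pos_iff.mp (Nat.pos_of_ne_zero hne)) (not_lt.mpr h)

lemma beta_strict {l : YoungDiagram} {k i m : ℕ} (him : i < m) (hm : m < k) :
    beta l k m < beta l k i := by
  have h1 : l.rowLen m ≤ l.rowLen i := l.rowLen_anti i m him.le
  have h2 : k - 1 - m < k - 1 - i := by omega
  unfold beta; omega

lemma card_eq_sum_rowLen (l : YoungDiagram) {k : ℕ} (hk : l.colLen 0 ≤ k) :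
    l.card = ∑ i ∈ range k, l.rowLen i := by
  classical
  have : l.cells = (range k).biUnion (fun i => l.row i) := by
    ext c
    simp only [Finset.mem_biUnion, Finset.mem_range, YoungDiagram.mem_row_iff]
    constructor
    · intro hc
      refine ⟨c.1, ?_, ?_, rfl⟩
      · have hm : (c.1, c.2) ∈ l := by rw [YoungDiagram.mem_cells] at hc; exact hc
        have : 0 < l.rowLen c.1 := by
          have := YoungDiagram.mem_iff_lt_rowLen.mp hm; omega
        have := rowLen_pos_iff.mp this
        omega
      · exact hc
    · rintro ⟨i, _, hc, rfl⟩; exact hc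
  rw [YoungDiagram.card, this, Finset.card_biUnion]
  · exact Finset.sum_congr rfl (fun i _ => (l.rowLen_eq_card (i := i)).symm)
  · intro a _ b _ hab
    intro s hsa hsb c hc
    have h1 := (YoungDiagram.mem_row_iff.mp (hsa hc)).2
    have h2 := (YoungDiagram.mem_row_iff.mp (hsb hc)).2
    exact absurd (h1 ▸ h2) hab



lemma mem_l {l : YoungDiagram} {i j : ℕ} (h : j < l.rowLen i) : (i, j) ∈ l :=
  YoungDiagram.mem_iff_lt_rowLen.mpr h

lemma colLen_bound {l : YoungDiagram} {i j : ℕ} (h : j < l.rowLen i) : i < l.colLen j :=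
  YoungDiagram.mem_iff_lt_colLen.mp (mem_l h)

lemma hookLength_eq {l : YoungDiagram} {i j : ℕ} (h : j < l.rowLen i) :
    hookLength l (i, j) = (l.rowLen i - j) + (l.colLen j - i) - 1 := rfl

-- strict antitonicity of hooks along a row
lemma hook_lt {l : YoungDiagram} {i j1 j2 : ℕ} (h12 : j1 < j2) (h : j2 < l.rowLen i) :
    hookLength l (i, j2) < hookLength l (i, j1) := by
  have hc : l.colLen j2 ≤ l.colLen j1 := l.colLen_anti j1 j2 h12.le
  have hb1 : i < l.colLen j1 := colLen_bound (lt_trans h12 h)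
  have hb2 : i < l.colLen j2 := colLen_bound h
  have e1 := hookLength_eq (l := l) (lt_trans h12 h)
  have e2 := hookLength_eq (l := l) h
  omega

lemma hook_range {l : YoungDiagram} {k i j : ℕ} (hk : l.colLen 0 ≤ k) (hik : i < k)
    (h : j < l.rowLen i) : hookLength l (i, j) ∈ Finset.Icc 1 (beta l k i) := by
  have hb : i < l.colLen j := colLen_bound h
  have hc : l.colLen j ≤ l.colLen 0 := l.colLen_anti 0 j (Nat.zero_le j)
  have e := hookLength_eq (l := l) h
  simp only [Finset.mem_Icc]
  unfold beta
  omega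

lemma hook_ne_diff {l : YoungDiagram} {k i j m : ℕ} (him : i < m) (hm : m < k)
    (h : j < l.rowLen i) : hookLength l (i, j) ≠ beta l k i - beta l k m := by
  have e := hookLength_eq (l := l) h
  have hb : i < l.colLen j := colLen_bound h
  have hmono : l.rowLen m ≤ l.rowLen i := l.rowLen_anti i m him.le
  intro heq
  unfold beta at heq
  -- two cases on whether (m,j) ∈ l
  rcases lt_or_ge m (l.colLen j) with hcase | hcase
  · have : j < l.rowLen m := YoungDiagram.mem_iff_lt_rowLen.mp
      (YoungDiagram.mem_iff_lt_colLen.mpr hcase)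
    omega
  · have : l.rowLen m ≤ j := by
      by_contra hx
      exact absurd (colLen_bound (Nat.lt_of_not_le hx)) (Nat.not_lt.mpr hcase)
    omega

lemma row_partition (l : YoungDiagram) {k i : ℕ} (hk : l.colLen 0 ≤ k) (hik : i < k) :
    ((range (l.rowLen i)).image (fun j => hookLength l (i, j))) ∪
      ((Ioo i k).image (fun m => beta l k i - beta l k m)) = Finset.Icc 1 (beta l k i) ∧
    Disjoint ((range (l.rowLen i)).image (fun j => hookLength l (i, j)))
      ((Ioo i k).image (fun m => beta l k i - beta l k m)) := by
  classical
  have hdisj : Disjoint ((range (l.rowLen i)).image (fun j => hookLength l (i, j)))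
      ((Ioo i k).image (fun m => beta l k i - beta l k m)) := by
    rw [Finset.disjoint_left]
    rintro a ha hb
    obtain ⟨j, hj, rfl⟩ := Finset.mem_image.mp ha
    obtain ⟨m, hm, heq⟩ := Finset.mem_image.mp hb
    rw [Finset.mem_Ioo] at hm
    rw [Finset.mem_range] at hj
    exact hook_ne_diff hm.1 hm.2 hj heq.symm
  have hinj1 : Set.InjOn (fun j => hookLength l (i, j)) (range (l.rowLen i)) := by
    intro a ha b hb hab
    simp only [Finset.coe_range, Set.mem_Iio] at ha hb
    rcases lt_trichotomy a b with h | h | h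
    · exact absurd hab (Nat.ne_of_gt (hook_lt h hb))
    · exact h
    · exact absurd hab (Nat.ne_of_lt (hook_lt h ha))
  have hinj2 : Set.InjOn (fun m => beta l k i - beta l k m) (Ioo i k) := by
    intro a ha b hb hab
    simp only [Finset.coe_Ioo, Set.mem_Ioo] at ha hb
    simp only at hab
    have hia := beta_strict (l := l) ha.1 ha.2
    have hib := beta_strict (l := l) hb.1 hb.2
    rcases lt_trichotomy a b with h | h | h
    · have := beta_strict (l := l) (k := k) h hb.2; omega
    · exact h
    · have := beta_strict (l := l) (k := k) h ha.2; omega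
  have hsub : ((range (l.rowLen i)).image (fun j => hookLength l (i, j))) ∪
      ((Ioo i k).image (fun m => beta l k i - beta l k m)) ⊆ Finset.Icc 1 (beta l k i) := by
    intro a ha
    rcases Finset.mem_union.mp ha with h | h
    · obtain ⟨j, hj, rfl⟩ := Finset.mem_image.mp h
      exact hook_range hk hik (Finset.mem_range.mp hj)
    · obtain ⟨m, hm, rfl⟩ := Finset.mem_image.mp h
      rw [Finset.mem_Ioo] at hm
      have := beta_strict (l := l) hm.1 hm.2
      simp only [Finset.mem_Icc]
      omega
  refine ⟨Finset.eq_of_subset_of_card_le hsub ?_, hdisj⟩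
  rw [Finset.card_union_of_disjoint hdisj, Finset.card_image_of_injOn hinj1,
    Finset.card_image_of_injOn hinj2, Nat.card_Icc, Nat.card_Ioo, Finset.card_range]
  unfold beta
  omega

lemma row_hook_prod (l : YoungDiagram) {k i : ℕ} (hk : l.colLen 0 ≤ k) (hik : i < k) :
    (∏ j ∈ range (l.rowLen i), hookLength l (i, j)) *
      (∏ m ∈ Ioo i k, (beta l k i - beta l k m)) = (beta l k i)! := by
  classical
  obtain ⟨hu, hd⟩ := row_partition l hk hik
  have h1 : ∏ j ∈ range (l.rowLen i), hookLength l (i, j) =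
      ∏ a ∈ (range (l.rowLen i)).image (fun j => hookLength l (i, j)), a := by
    rw [Finset.prod_image]
    intro a ha b hb hab
    rcases lt_trichotomy a b with h | h | h
    · exact absurd hab (Nat.ne_of_gt (hook_lt h (Finset.mem_range.mp hb)))
    · exact h
    · exact absurd hab (Nat.ne_of_lt (hook_lt h (Finset.mem_range.mp ha)))
  have h2 : ∏ m ∈ Ioo i k, (beta l k i - beta l k m) =
      ∏ a ∈ (Ioo i k).image (fun m => beta l k i - beta l k m), a := by
    rw [Finset.prod_image]
    intro a ha b hb hab
    simp only [Finset.coe_Ioo, Set.mem_Ioo] at ha hb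
    simp only at hab
    have hia := beta_strict (l := l) ha.1 ha.2
    have hib := beta_strict (l := l) hb.1 hb.2
    rcases lt_trichotomy a b with h | h | h
    · have := beta_strict (l := l) (k := k) h hb.2; omega
    · exact h
    · have := beta_strict (l := l) (k := k) h ha.2; omega
  rw [h1, h2, ← Finset.prod_union hd, hu]
  have := Finset.prod_Ico_id_eq_factorial (beta l k i)
  rw [← this]
  rw [show Finset.Icc 1 (beta l k i) = Finset.Ico 1 (beta l k i + 1) by
    rw [Finset.Ico_add_one_right_eq_Icc]]



variable {v : ℕ → ℚ} {s : Finset ℕ}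

lemma leadingCoeff_basisDivisor {a b : ℚ} (h : a ≠ b) :
    (basisDivisor a b).leadingCoeff = (a - b)⁻¹ := by
  rw [basisDivisor, leadingCoeff_mul, leadingCoeff_C, (monic_X_sub_C b).leadingCoeff, mul_one]

lemma coeff_basis (hvs : Set.InjOn v s) {i : ℕ} (hi : i ∈ s) :
    (Lagrange.basis s v i).coeff (#s - 1) = nodalWeight s v i := by
  have hd := natDegree_basis hvs hi
  rw [← hd, Polynomial.coeff_natDegree, Lagrange.basis, leadingCoeff_prod]
  unfold nodalWeight
  refine Finset.prod_congr rfl fun j hj => ?_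
  have hji := (Finset.mem_erase.mp hj).1
  have hvij : v i ≠ v j := fun h => hji (hvs (Finset.mem_of_mem_erase hj) hi h.symm)
  exact leadingCoeff_basisDivisor hvij

lemma sum_eval_weight_eq_coeff (hvs : Set.InjOn v s) {P : ℚ[X]} (hP : P.degree < #s) :
    ∑ i ∈ s, P.eval (v i) * nodalWeight s v i = P.coeff (#s - 1) := by
  conv_rhs => rw [eq_interpolate hvs hP]
  rw [interpolate_apply, finset_sum_coeff]
  refine Finset.sum_congr rfl fun i hi => ?_
  rw [Polynomial.coeff_C_mul, coeff_basis hvs hi]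

lemma nodal_coeff_card (hs : s.Nonempty) :
    (nodal s v).coeff (#s - 1) = -∑ i ∈ s, v i := by
  induction hs using Finset.Nonempty.cons_induction with
  | singleton a => simp [nodal]
  | cons a t ha ht ih =>
    rw [Finset.cons_eq_insert, nodal_insert_eq_nodal ha]
    have hm : 1 ≤ #t := Finset.card_pos.mpr ht
    rw [Finset.card_insert_of_notMem ha]
    have hidx : #t + 1 - 1 = (#t - 1) + 1 := by omega
    rw [hidx, sub_mul, Polynomial.coeff_sub, Polynomial.coeff_X_mul]
    have h1 : (nodal t v).coeff (#t - 1 + 1) = 1 := by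
      have : #t - 1 + 1 = #t := by omega
      rw [this, ← natDegree_nodal (v := v) (s := t), Polynomial.coeff_natDegree]
      exact (nodal_monic).leadingCoeff
    rw [Polynomial.coeff_C_mul, h1, ih, Finset.sum_insert ha]
    ring

lemma nodal_coeff_card2_shift (h2 : 2 ≤ #s) :
    (nodal s (fun i => v i + 1)).coeff (#s - 2) =
      (nodal s v).coeff (#s - 2) + ((#s : ℚ) - 1) * (∑ i ∈ s, v i)
        + (#s : ℚ) * ((#s : ℚ) - 1) / 2 := by
  -- reformulate: s = cons a t with t nonempty
  obtain ⟨a, t, ha, rfl⟩ : ∃ a t, ∃ (ha : a ∉ t), s = Finset.cons a t ha := by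
    obtain ⟨a, ha⟩ := Finset.card_pos.mp (by omega : 0 < #s)
    exact ⟨a, s.erase a, Finset.notMem_erase a s, by simp [Finset.insert_erase ha]⟩
  have ht : t.Nonempty := by
    rw [Finset.card_cons] at h2
    exact Finset.card_pos.mp (by omega)
  clear h2
  induction ht using Finset.Nonempty.cons_induction generalizing a with
  | singleton b =>
    have hab : a ≠ b := by simpa using ha
    simp only [Finset.cons_eq_insert, Finset.card_insert_of_notMem ha]
    rw [nodal_insert_eq_nodal ha, nodal_insert_eq_nodal ha]
    simp [nodal, Polynomial.mul_coeff_zero, Finset.sum_insert ha]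
    ring
  | cons b t hb htne ih =>
    -- s = cons a (cons b t)
    set N : ℚ[X] := nodal (Finset.cons b t hb) v with hN
    set N' : ℚ[X] := nodal (Finset.cons b t hb) (fun i => v i + 1) with hN'
    have hmcard : #(Finset.cons b t hb) = #t + 1 := Finset.card_cons hb
    set m : ℕ := #t + 1 with hm
    have hm1 : 1 ≤ m := by omega
    have hSne : (Finset.cons b t hb).Nonempty := Finset.cons_nonempty hb
    have hc1 : N.coeff (m - 1) = -∑ i ∈ Finset.cons b t hb, v i := by
      rw [hN, ← hmcard] at *; exact nodal_coeff_card hSne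
    have hc1' : N'.coeff (m - 1) = -∑ i ∈ Finset.cons b t hb, (v i + 1) := by
      have := nodal_coeff_card (v := fun i => v i + 1) hSne
      rw [hmcard] at this; exact this
    have hctop : N.coeff m = 1 := by
      have : m = N.natDegree := by rw [hN, natDegree_nodal, hmcard]
      rw [this, Polynomial.coeff_natDegree]; exact nodal_monic.leadingCoeff
    have hctop' : N'.coeff m = 1 := by
      have : m = N'.natDegree := by rw [hN', natDegree_nodal, hmcard]
      rw [this, Polynomial.coeff_natDegree]; exact nodal_monic.leadingCoeff
    have ihx := ih b hb
    set S : ℚ := ∑ i ∈ Finset.cons b t hb, v i with hS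
    have hsum1 : ∑ i ∈ Finset.cons b t hb, (v i + 1) = S + (m : ℚ) := by
      rw [Finset.sum_add_distrib, Finset.sum_const, hmcard, hS]; push_cast; ring
    rw [hsum1] at hc1'
    have hcard2 : #(Finset.cons a (Finset.cons b t hb) ha) = m + 1 := by
      rw [Finset.card_cons, hmcard]
    rw [hcard2]
    have hm2 : 2 ≤ m := by rw [hm]; have := Finset.card_pos.mpr htne; omega
    have hidx : m + 1 - 2 = (m - 2) + 1 := by omega
    have hidx2 : m - 1 = (m - 2) + 1 := by omega
    have hnodA : nodal (Finset.cons a (Finset.cons b t hb) ha) v = (X - C (v a)) * N := by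
      rw [Finset.cons_eq_insert, nodal_insert_eq_nodal ha, hN]
    have hnodA' : nodal (Finset.cons a (Finset.cons b t hb) ha) (fun i => v i + 1)
        = (X - C (v a + 1)) * N' := by
      rw [Finset.cons_eq_insert, nodal_insert_eq_nodal ha, hN']
    rw [hnodA, hnodA', hidx, sub_mul, sub_mul, Polynomial.coeff_sub, Polynomial.coeff_sub,
      Polynomial.coeff_X_mul, Polynomial.coeff_X_mul, Polynomial.coeff_C_mul,
      Polynomial.coeff_C_mul, ← hidx2, hc1, hc1']
    have hsumA : ∑ i ∈ Finset.cons a (Finset.cons b t hb) ha, v i = v a + S := by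
      rw [Finset.sum_cons, hS]
    rw [hsumA]
    have hmidx : #(Finset.cons b t hb) - 2 = m - 2 := by rw [hmcard]
    rw [hmidx, hmcard] at ihx
    rw [ihx]
    push_cast
    ring


lemma sum_eval_weight_deg_le (hvs : Set.InjOn v s) {P : ℚ[X]}
    (hP : P.natDegree ≤ #s) :
    ∑ i ∈ s, P.eval (v i) * nodalWeight s v i
      = P.coeff (#s - 1) - P.coeff #s * (nodal s v).coeff (#s - 1) := by
  set Q : ℚ[X] := P - C (P.coeff #s) * nodal s v with hQ
  have hnod_top : (nodal s v).coeff #s = 1 := by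
    have h1 : #s = (nodal s v).natDegree := (natDegree_nodal (v := v)).symm
    rw [h1, Polynomial.coeff_natDegree]; exact nodal_monic.leadingCoeff
  have hdeg : Q.degree < (#s : ℕ) := by
    rw [Polynomial.degree_lt_iff_coeff_zero]
    intro m hm
    rw [hQ, Polynomial.coeff_sub, Polynomial.coeff_C_mul]
    rcases eq_or_lt_of_le hm with h | h
    · rw [← h, hnod_top, mul_one, sub_self]
    · have h1 : P.coeff m = 0 := Polynomial.coeff_eq_zero_of_natDegree_lt (lt_of_le_of_lt hP h)
      have h2 : (nodal s v).coeff m = 0 := by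
        apply Polynomial.coeff_eq_zero_of_natDegree_lt
        rw [natDegree_nodal]; exact h
      rw [h1, h2, mul_zero, sub_zero]
  have heval : ∀ i ∈ s, Q.eval (v i) = P.eval (v i) := by
    intro i hi
    rw [hQ, Polynomial.eval_sub, Polynomial.eval_mul, Polynomial.eval_C,
      eval_nodal_at_node hi, mul_zero, sub_zero]
  have h1 := sum_eval_weight_eq_coeff hvs (P := Q) (by exact_mod_cast hdeg)
  have h2 : ∑ i ∈ s, Q.eval (v i) * nodalWeight s v i
      = ∑ i ∈ s, P.eval (v i) * nodalWeight s v i :=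
    Finset.sum_congr rfl fun i hi => by rw [heval i hi]
  rw [← h2, h1, hQ, Polynomial.coeff_sub, Polynomial.coeff_C_mul]

lemma key_sum {x : ℕ → ℚ} {k : ℕ} (hk : 2 ≤ k) (hx : Set.InjOn x (range k)) :
    ∑ i ∈ range k, (x i * ((nodal (range k) (fun a => x a + 1)).eval (x i)))
        * nodalWeight (range k) x i
      = -(∑ i ∈ range k, x i) + (k : ℚ) * ((k : ℚ) - 1) / 2 := by
  classical
  set F : ℚ[X] := nodal (range k) x with hF
  set F₁ : ℚ[X] := nodal (range k) (fun a => x a + 1) with hF₁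
  set P : ℚ[X] := X * (F₁ - F) with hP
  have hcard : #(range k) = k := Finset.card_range k
  have hne : (range k).Nonempty := by rw [← Finset.card_pos, hcard]; omega
  have htop : ∀ (w : ℕ → ℚ), (nodal (range k) w).coeff k = 1 := by
    intro w
    have h := (nodal_monic (s := range k) (v := w)).coeff_natDegree
    rwa [natDegree_nodal, hcard] at h
  have hzero : ∀ (w : ℕ → ℚ) m, k < m → (nodal (range k) w).coeff m = 0 := by
    intro w m hm
    apply Polynomial.coeff_eq_zero_of_natDegree_lt
    rw [natDegree_nodal, hcard]; exact hm
  have hdiff : (F₁ - F).degree ≤ ((k - 1 : ℕ) : WithBot ℕ) := by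
    rw [Polynomial.degree_le_iff_coeff_zero]
    intro m hm
    have hm' : k ≤ m := by
      have : k - 1 < m := by exact_mod_cast hm
      omega
    rw [Polynomial.coeff_sub]
    rcases eq_or_lt_of_le hm' with h | h
    · rw [hF, hF₁, ← h, htop, htop, sub_self]
    · rw [hF, hF₁, hzero _ _ h, hzero _ _ h, sub_self]
  have hPdeg : P.natDegree ≤ k := by
    calc P.natDegree ≤ X.natDegree + (F₁ - F).natDegree := Polynomial.natDegree_mul_le
    _ ≤ 1 + (k - 1) := by
        gcongr
        · exact Polynomial.natDegree_X_le
        · exact Polynomial.natDegree_le_iff_degree_le.mpr hdiff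
    _ ≤ k := by omega
  have heval : ∀ i ∈ range k, P.eval (x i)
      = x i * ((nodal (range k) (fun a => x a + 1)).eval (x i)) := by
    intro i hi
    rw [hP, Polynomial.eval_mul, Polynomial.eval_sub, Polynomial.eval_X,
      hF, eval_nodal_at_node hi, sub_zero, hF₁]
  have hL2 := sum_eval_weight_deg_le (s := range k) hx (P := P) (by rw [hcard]; exact hPdeg)
  rw [hcard] at hL2
  have hrw : ∑ i ∈ range k, (x i * ((nodal (range k) (fun a => x a + 1)).eval (x i)))
        * nodalWeight (range k) x i
      = ∑ i ∈ range k, P.eval (x i) * nodalWeight (range k) x i :=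
    Finset.sum_congr rfl fun i hi => by rw [heval i hi]
  rw [hrw, hL2]
  -- now compute the coefficients
  set S : ℚ := ∑ i ∈ range k, x i with hS
  have hc1 : F.coeff (k - 1) = -S := by
    have := nodal_coeff_card (v := x) hne
    rw [hcard] at this; exact this
  have hc1' : F₁.coeff (k - 1) = -(S + k) := by
    have := nodal_coeff_card (v := fun a => x a + 1) hne
    rw [hcard] at this
    rw [hF₁, this, Finset.sum_add_distrib, Finset.sum_const, hcard]
    push_cast; ring
  have hc2diff : (F₁ - F).coeff (k - 2) = ((k : ℚ) - 1) * S + (k : ℚ) * ((k : ℚ) - 1) / 2 := by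
    have := nodal_coeff_card2_shift (v := x) (s := range k) (by rw [hcard]; exact hk)
    rw [hcard] at this
    rw [Polynomial.coeff_sub, hF₁, hF, this, ← hS]
    ring
  have hPk : P.coeff k = (F₁ - F).coeff (k - 1) := by
    conv_lhs => rw [hP, show k = (k-1)+1 by omega]
    rw [Polynomial.coeff_X_mul]
  have hPk1 : P.coeff (k - 1) = (F₁ - F).coeff (k - 2) := by
    conv_lhs => rw [hP, show k - 1 = (k-2)+1 by omega]
    rw [Polynomial.coeff_X_mul]
  have hd1 : (F₁ - F).coeff (k - 1) = -(k : ℚ) := by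
    rw [Polynomial.coeff_sub, hc1', hc1]; ring
  rw [hPk, hPk1, hd1, hc2diff, hc1]
  ring


def TT (k : ℕ) : Finset (ℕ × ℕ) := (range k).biUnion (fun i => {i} ×ˢ Ioo i k)

lemma mem_TT {k : ℕ} {p : ℕ × ℕ} : p ∈ TT k ↔ p.1 < p.2 ∧ p.2 < k := by
  unfold TT
  simp only [Finset.mem_biUnion, Finset.mem_range, Finset.mem_product,
    Finset.mem_singleton, Finset.mem_Ioo]
  constructor
  · rintro ⟨i, hi, rfl, h⟩; exact h
  · rintro ⟨h1, h2⟩; exact ⟨p.1, by omega, rfl, h1, h2⟩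

def Dq (x : ℕ → ℚ) (k : ℕ) : ℚ := ∏ p ∈ TT k, (x p.1 - x p.2)

lemma Dq_eq_nested (x : ℕ → ℚ) (k : ℕ) :
    Dq x k = ∏ i ∈ range k, ∏ m ∈ Ioo i k, (x i - x m) := by
  unfold Dq TT
  rw [Finset.prod_biUnion]
  · refine Finset.prod_congr rfl fun i _ => ?_
    rw [Finset.prod_product]
    simp
  · intro a _ b _ hab
    intro u hua hub p hp
    have h1 := (Finset.mem_product.mp (hua hp)).1
    have h2 := (Finset.mem_product.mp (hub hp)).1
    rw [Finset.mem_singleton] at h1 h2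
    exact absurd (h1 ▸ h2) hab

lemma erase_range_split {k i : ℕ} (hik : i < k) :
    (range k).erase i = range i ∪ Ioo i k := by
  ext a
  simp only [Finset.mem_erase, Finset.mem_range, Finset.mem_union, Finset.mem_Ioo]
  omega

lemma Dq_split (x : ℕ → ℚ) {k i : ℕ} (hik : i < k) :
    Dq x k = ((∏ a ∈ range i, (x a - x i)) * (∏ m ∈ Ioo i k, (x i - x m))) *
      ∏ p ∈ (TT k).filter (fun p => ¬ p.1 = i ∧ ¬ p.2 = i), (x p.1 - x p.2) := by
  classical
  unfold Dq
  rw [← Finset.prod_filter_mul_prod_filter_not (TT k) (fun p => p.1 = i)]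
  rw [← Finset.prod_filter_mul_prod_filter_not ((TT k).filter (fun p => ¬ p.1 = i))
    (fun p => p.2 = i), Finset.filter_filter, Finset.filter_filter]
  have h1 : ∏ p ∈ (TT k).filter (fun p => p.1 = i), (x p.1 - x p.2)
      = ∏ m ∈ Ioo i k, (x i - x m) := by
    apply Finset.prod_nbij' (fun p => p.2) (fun m => (i, m))
    · intro p hp
      rw [Finset.mem_filter] at hp
      obtain ⟨hpT, hp1⟩ := hp
      rw [mem_TT] at hpT
      rw [Finset.mem_Ioo]
      omega
    · intro m hm
      rw [Finset.mem_Ioo] at hm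
      rw [Finset.mem_filter, mem_TT]
      exact ⟨⟨hm.1, hm.2⟩, rfl⟩
    · intro p hp
      rw [Finset.mem_filter] at hp
      exact Prod.ext hp.2.symm rfl
    · intro m _; rfl
    · intro p hp
      rw [Finset.mem_filter] at hp
      rw [hp.2]
  have h2 : ∏ p ∈ (TT k).filter (fun p => ¬ p.1 = i ∧ p.2 = i), (x p.1 - x p.2)
      = ∏ a ∈ range i, (x a - x i) := by
    apply Finset.prod_nbij' (fun p => p.1) (fun a => (a, i))
    · intro p hp
      rw [Finset.mem_filter] at hp
      obtain ⟨hpT, hp1, hp2⟩ := hp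
      rw [mem_TT] at hpT
      rw [Finset.mem_range]
      omega
    · intro a ha
      rw [Finset.mem_range] at ha
      rw [Finset.mem_filter, mem_TT]
      exact ⟨⟨ha, hik⟩, by omega, rfl⟩
    · intro p hp
      rw [Finset.mem_filter] at hp
      exact Prod.ext rfl hp.2.2.symm
    · intro a _; rfl
    · intro p hp
      rw [Finset.mem_filter] at hp
      rw [hp.2.2]
  rw [h1, h2]
  ring

lemma Dq_upd (x : ℕ → ℚ) {k i : ℕ} (hik : i < k) :
    Dq (Function.update x i (x i - 1)) k * ∏ j ∈ (range k).erase i, (x i - x j)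
      = Dq x k * ∏ j ∈ (range k).erase i, (x i - x j - 1) := by
  classical
  set y := Function.update x i (x i - 1) with hy
  have hyi : y i = x i - 1 := Function.update_self i _ x
  have hyj : ∀ j, j ≠ i → y j = x j := fun j hj => Function.update_of_ne hj _ x
  have hsplit := erase_range_split hik
  have hdisj : Disjoint (range i) (Ioo i k) := by
    rw [Finset.disjoint_left]
    intro a ha hb
    rw [Finset.mem_range] at ha
    rw [Finset.mem_Ioo] at hb
    omega
  have herase : ∀ f : ℕ → ℚ, ∏ j ∈ (range k).erase i, f j
      = (∏ j ∈ range i, f j) * ∏ j ∈ Ioo i k, f j := by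
    intro f; rw [hsplit, Finset.prod_union hdisj]
  rw [Dq_split y hik, Dq_split x hik, herase, herase]
  have hrest : ∏ p ∈ (TT k).filter (fun p => ¬ p.1 = i ∧ ¬ p.2 = i), (y p.1 - y p.2)
      = ∏ p ∈ (TT k).filter (fun p => ¬ p.1 = i ∧ ¬ p.2 = i), (x p.1 - x p.2) := by
    refine Finset.prod_congr rfl fun p hp => ?_
    rw [Finset.mem_filter] at hp
    rw [hyj _ hp.2.1, hyj _ hp.2.2]
  have hA : ∏ a ∈ range i, (y a - y i) = ∏ a ∈ range i, (x a - x i + 1) := by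
    refine Finset.prod_congr rfl fun a ha => ?_
    rw [Finset.mem_range] at ha
    rw [hyj a (by omega), hyi]; ring
  have hB : ∏ m ∈ Ioo i k, (y i - y m) = ∏ m ∈ Ioo i k, (x i - x m - 1) := by
    refine Finset.prod_congr rfl fun m hm => ?_
    rw [Finset.mem_Ioo] at hm
    rw [hyj m (by omega), hyi]; ring
  rw [hrest, hA, hB]
  set R := ∏ p ∈ (TT k).filter (fun p => ¬ p.1 = i ∧ ¬ p.2 = i), (x p.1 - x p.2)
  have e1 : (∏ a ∈ range i, (x a - x i + 1)) * (∏ a ∈ range i, (x i - x a))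
      = (∏ a ∈ range i, (x a - x i)) * (∏ a ∈ range i, (x i - x a - 1)) := by
    rw [← Finset.prod_mul_distrib, ← Finset.prod_mul_distrib]
    exact Finset.prod_congr rfl fun a _ => by ring
  have e2 : (∏ m ∈ Ioo i k, (x i - x m - 1)) * (∏ m ∈ Ioo i k, (x i - x m))
      = (∏ m ∈ Ioo i k, (x i - x m)) * (∏ m ∈ Ioo i k, (x i - x m - 1)) := mul_comm _ _
  calc (∏ a ∈ range i, (x a - x i + 1)) * (∏ m ∈ Ioo i k, (x i - x m - 1)) * R *
        ((∏ j ∈ range i, (x i - x j)) * ∏ j ∈ Ioo i k, (x i - x j))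
      = ((∏ a ∈ range i, (x a - x i + 1)) * (∏ a ∈ range i, (x i - x a))) *
        ((∏ m ∈ Ioo i k, (x i - x m - 1)) * (∏ m ∈ Ioo i k, (x i - x m))) * R := by ring
    _ = ((∏ a ∈ range i, (x a - x i)) * (∏ a ∈ range i, (x i - x a - 1))) *
        ((∏ m ∈ Ioo i k, (x i - x m)) * (∏ m ∈ Ioo i k, (x i - x m - 1))) * R := by
        rw [e1, e2]
    _ = (∏ a ∈ range i, (x a - x i)) * (∏ m ∈ Ioo i k, (x i - x m)) * R *
        ((∏ j ∈ range i, (x i - x j - 1)) * ∏ j ∈ Ioo i k, (x i - x j - 1)) := by ring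

lemma main_identity {x : ℕ → ℚ} {k : ℕ} (hx : Set.InjOn x (range k)) :
    ∑ i ∈ range k, x i * Dq (Function.update x i (x i - 1)) k
      = ((∑ i ∈ range k, x i) - (k : ℚ) * ((k : ℚ) - 1) / 2) * Dq x k := by
  classical
  rcases Nat.lt_or_ge k 2 with hk | hk
  · interval_cases k
    · simp [Dq, TT]
    · have hT : TT 1 = ∅ := by
        ext p; rw [mem_TT]; simp; omega
      simp [Dq, hT]
  · have hprodne : ∀ i ∈ range k, ∏ j ∈ (range k).erase i, (x i - x j) ≠ 0 := by
      intro i hi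
      rw [Finset.prod_ne_zero_iff]
      intro j hj
      rw [Finset.mem_erase] at hj
      refine sub_ne_zero_of_ne fun h => hj.1 (hx hj.2 hi h.symm)
    have hterm : ∀ i ∈ range k, x i * Dq (Function.update x i (x i - 1)) k
        = (x i * ((nodal (range k) (fun a => x a + 1)).eval (x i)))
            * nodalWeight (range k) x i * (- Dq x k) := by
      intro i hi
      have hik : i < k := Finset.mem_range.mp hi
      have hupd := Dq_upd x hik
      have hF₁ : (nodal (range k) (fun a => x a + 1)).eval (x i)
          = - ∏ j ∈ (range k).erase i, (x i - x j - 1) := by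
        rw [eval_nodal, ← Finset.mul_prod_erase _ _ hi]
        have : ∀ j, x i - (x j + 1) = x i - x j - 1 := fun j => by ring
        rw [this i]
        rw [show x i - x i - 1 = -1 by ring]
        rw [neg_one_mul, neg_inj]
        exact Finset.prod_congr rfl fun j _ => this j
      have hw : nodalWeight (range k) x i = (∏ j ∈ (range k).erase i, (x i - x j))⁻¹ := by
        rw [nodalWeight, ← Finset.prod_inv_distrib]
      have hDupd : Dq (Function.update x i (x i - 1)) k
          = Dq x k * (∏ j ∈ (range k).erase i, (x i - x j - 1))
            * (∏ j ∈ (range k).erase i, (x i - x j))⁻¹ := by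
        rw [eq_mul_inv_iff_mul_eq₀ (hprodne i hi)]
        exact hupd
      rw [hDupd, hF₁, hw]
      ring
    rw [Finset.sum_congr rfl hterm, ← Finset.sum_mul, key_sum hk hx]
    ring



lemma sdiff_bot (l : YoungDiagram) : l.cells \ (⊥ : YoungDiagram).cells = l.cells := by
  rw [YoungDiagram.cells_bot, Finset.sdiff_empty]

lemma card_bot : (⊥ : YoungDiagram).card = 0 := by
  rw [YoungDiagram.card, YoungDiagram.cells_bot, Finset.card_empty]

lemma std_bot (l : YoungDiagram) (T : ℕ × ℕ → ℕ) : IsStdFilling ⊥ l T ↔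
    (Set.BijOn T ↑l.cells (Set.Icc 1 l.card) ∧
     (∀ c, c ∉ l.cells → T c = 0) ∧
     (∀ i j₁ j₂, j₁ < j₂ → (i, j₁) ∈ l.cells → (i, j₂) ∈ l.cells → T (i, j₁) < T (i, j₂)) ∧
     (∀ i₁ i₂ j, i₁ < i₂ → (i₁, j) ∈ l.cells → (i₂, j) ∈ l.cells → T (i₁, j) < T (i₂, j))) := by
  unfold IsStdFilling
  rw [sdiff_bot, card_bot, Nat.sub_zero]

instance finiteStd (μ l : YoungDiagram) : Finite { T : ℕ × ℕ → ℕ // IsStdFilling μ l T } := by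
  classical
  set D := l.cells \ μ.cells with hD
  set n := l.card - μ.card with hn
  have : ∀ (T : { T : ℕ × ℕ → ℕ // IsStdFilling μ l T }) (c : ℕ × ℕ), c ∈ D → T.1 c ∈ Finset.Icc 1 n := by
    intro T c hc
    have := T.2.1.mapsTo (Finset.mem_coe.mpr hc)
    rwa [Finset.mem_Icc, ← Set.mem_Icc]
  refine Finite.of_injective
    (fun T => (fun c : {c : ℕ × ℕ // c ∈ D} => (⟨T.1 c.1, this T c.1 c.2⟩ : {v // v ∈ Finset.Icc 1 n})))
    ?_
  intro T1 T2 h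
  apply Subtype.ext
  funext c
  by_cases hc : c ∈ D
  · exact congrArg Subtype.val (congrFun h ⟨c, hc⟩)
  · rw [T1.2.2.1 c hc, T2.2.2.1 c hc]

lemma sytCount_card_zero {l : YoungDiagram} (h : l.card = 0) : sytCount ⊥ l = 1 := by
  have hcells : l.cells = ∅ := Finset.card_eq_zero.mp h
  have huniq : ∀ T, IsStdFilling ⊥ l T ↔ T = fun _ => 0 := by
    intro T
    rw [std_bot, hcells]
    constructor
    · rintro ⟨-, hz, -, -⟩
      funext c
      exact hz c (by simp)
    · rintro rfl
      refine ⟨?_, fun c _ => rfl, by simp, by simp⟩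
      rw [h]
      constructor
      · intro c hc; simp at hc
      constructor
      · intro c hc _ _ _; simp at hc
      · intro v hv
        rw [Set.mem_Icc] at hv; omega
  have : Unique { T : ℕ × ℕ → ℕ // IsStdFilling ⊥ l T } := by
    refine ⟨⟨⟨fun _ => 0, (huniq _).mpr rfl⟩⟩, ?_⟩
    intro T
    apply Subtype.ext
    exact (huniq T.1).mp T.2
  rw [sytCount, Nat.card_unique]

def corners (l : YoungDiagram) : Finset ℕ :=
  (range (l.colLen 0)).filter (fun i => l.rowLen (i + 1) < l.rowLen i)

lemma mem_corners {l : YoungDiagram} {i : ℕ} :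
    i ∈ corners l ↔ i < l.colLen 0 ∧ l.rowLen (i + 1) < l.rowLen i := by
  unfold corners; rw [Finset.mem_filter, Finset.mem_range]

lemma corner_lower {l : YoungDiagram} {i : ℕ} (h : i ∈ corners l) :
    IsLowerSet (↑(l.cells.erase (i, l.rowLen i - 1)) : Set (ℕ × ℕ)) := by
  obtain ⟨hi, hcor⟩ := mem_corners.mp h
  have hr : 0 < l.rowLen i := rowLen_pos_iff.mpr hi
  rintro ⟨z1, z2⟩ y hyz hz
  simp only [Finset.coe_erase, Set.mem_diff, Finset.mem_coe, Set.mem_singleton_iff] at hz ⊢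
  obtain ⟨hzl, hzc⟩ := hz
  have hyl : y ∈ l.cells := by
    rw [YoungDiagram.mem_cells ((z1, z2) : ℕ × ℕ)] at hzl
    rw [YoungDiagram.mem_cells y]
    exact l.up_left_mem hyz.1 hyz.2 hzl
  refine ⟨hyl, ?_⟩
  rintro rfl
  have h1 : i ≤ z1 := hyz.1
  have h2 : l.rowLen i - 1 ≤ z2 := hyz.2
  have hz2 : z2 < l.rowLen z1 :=
    YoungDiagram.mem_iff_lt_rowLen.mp ((YoungDiagram.mem_cells ((z1, z2) : ℕ × ℕ)).mp hzl)
  rcases Nat.eq_or_lt_of_le h1 with heq | h1'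
  · subst heq
    have hz2' : z2 = l.rowLen i - 1 := by omega
    exact hzc (by rw [hz2'])
  · have : l.rowLen z1 ≤ l.rowLen (i + 1) := l.rowLen_anti _ _ h1'
    omega

noncomputable def eraseC (l : YoungDiagram) (i : ℕ) : YoungDiagram :=
  if h : i ∈ corners l then ⟨l.cells.erase (i, l.rowLen i - 1), corner_lower h⟩ else l

lemma eraseC_cells {l : YoungDiagram} {i : ℕ} (h : i ∈ corners l) :
    (eraseC l i).cells = l.cells.erase (i, l.rowLen i - 1) := by
  rw [eraseC, dif_pos h]

lemma corner_mem {l : YoungDiagram} {i : ℕ} (h : i ∈ corners l) :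
    (i, l.rowLen i - 1) ∈ l.cells := by
  obtain ⟨hi, _⟩ := mem_corners.mp h
  have hr : 0 < l.rowLen i := rowLen_pos_iff.mpr hi
  rw [YoungDiagram.mem_cells, YoungDiagram.mem_iff_lt_rowLen]
  omega

lemma eraseC_card {l : YoungDiagram} {i : ℕ} (h : i ∈ corners l) :
    (eraseC l i).card = l.card - 1 := by
  rw [YoungDiagram.card, eraseC_cells h, Finset.card_erase_of_mem (corner_mem h), YoungDiagram.card]

lemma rowLen_eq_of {μ : YoungDiagram} {i m : ℕ} (h : ∀ j, (i, j) ∈ μ ↔ j < m) :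
    μ.rowLen i = m := by
  have h1 := (YoungDiagram.mem_iff_lt_rowLen (μ := μ) (i := i) (j := m)).symm.trans (h m)
  have h2 := (h (μ.rowLen i)).symm.trans (YoungDiagram.mem_iff_lt_rowLen (μ := μ) (i := i) (j := μ.rowLen i))
  omega

lemma eraseC_rowLen_self {l : YoungDiagram} {i : ℕ} (h : i ∈ corners l) :
    (eraseC l i).rowLen i = l.rowLen i - 1 := by
  apply rowLen_eq_of
  intro j
  rw [← YoungDiagram.mem_cells, eraseC_cells h, Finset.mem_erase, YoungDiagram.mem_cells,
    YoungDiagram.mem_iff_lt_rowLen]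
  constructor
  · rintro ⟨hne, hj⟩
    rcases Nat.lt_or_ge j (l.rowLen i - 1) with h' | h'
    · exact h'
    · have hje : j = l.rowLen i - 1 := by omega
      exact absurd (by rw [hje]) hne
  · intro hj
    exact ⟨fun he => by have := congrArg Prod.snd he; simp at this; omega, by omega⟩

lemma eraseC_rowLen_ne {l : YoungDiagram} {i : ℕ} (h : i ∈ corners l) {j : ℕ} (hj : j ≠ i) :
    (eraseC l i).rowLen j = l.rowLen j := by
  apply rowLen_eq_of
  intro m
  rw [← YoungDiagram.mem_cells, eraseC_cells h, Finset.mem_erase, YoungDiagram.mem_cells,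
    YoungDiagram.mem_iff_lt_rowLen]
  constructor
  · rintro ⟨-, hm⟩; exact hm
  · intro hm
    exact ⟨fun he => hj (by have := congrArg Prod.fst he; simpa using this), hm⟩

lemma eraseC_colLen {l : YoungDiagram} {i : ℕ} (h : i ∈ corners l) :
    (eraseC l i).colLen 0 ≤ l.colLen 0 := by
  by_contra hc
  rw [not_le] at hc
  have h1 : (l.colLen 0, 0) ∈ eraseC l i := YoungDiagram.mem_iff_lt_colLen.mpr hc
  have h2 : (l.colLen 0, 0) ∈ l := by
    rw [← YoungDiagram.mem_cells] at h1 ⊢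
    rw [eraseC_cells h] at h1
    exact Finset.mem_of_mem_erase h1
  rw [YoungDiagram.mem_iff_lt_colLen] at h2
  omega


lemma bwd_std {l : YoungDiagram} {i : ℕ} (hi : i ∈ corners l) (hn : 1 ≤ l.card)
    {T' : ℕ × ℕ → ℕ} (hT' : IsStdFilling ⊥ (eraseC l i) T') :
    IsStdFilling ⊥ l (Function.update T' (i, l.rowLen i - 1) l.card) := by
  classical
  set n := l.card with hnn
  set c : ℕ × ℕ := (i, l.rowLen i - 1) with hc
  set U : ℕ × ℕ → ℕ := Function.update T' c n with hU
  have hE := eraseC_cells hi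
  have hcardE : (eraseC l i).card = n - 1 := eraseC_card hi
  have hcmem : c ∈ l.cells := corner_mem hi
  obtain ⟨hbij', hz', hrow', hcol'⟩ := (std_bot _ _).mp hT'
  rw [hcardE] at hbij'
  have hUc : U c = n := Function.update_self c n T'
  have hUx : ∀ x, x ≠ c → U x = T' x := fun x hx => Function.update_of_ne hx n T'
  have hmemE : ∀ x, x ∈ l.cells → x ≠ c → x ∈ (eraseC l i).cells := by
    intro x hx hne
    rw [hE, Finset.mem_erase]
    exact ⟨hne, hx⟩
  have hval : ∀ x, x ∈ l.cells → x ≠ c → T' x ∈ Set.Icc 1 (n - 1) := by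
    intro x hx hne
    exact hbij'.mapsTo (Finset.mem_coe.mpr (hmemE x hx hne))
  rw [std_bot]
  refine ⟨⟨?_, ?_, ?_⟩, ?_, ?_, ?_⟩
  · -- mapsTo
    intro x hx
    rw [Finset.mem_coe] at hx
    by_cases hxc : x = c
    · rw [hxc, hUc]; exact Set.mem_Icc.mpr ⟨hn, le_refl n⟩
    · have := hval x hx hxc
      rw [Set.mem_Icc] at *
      rw [hUx x hxc]
      omega
  · -- injOn
    intro x hx y hy hxy
    rw [Finset.mem_coe] at hx hy
    by_cases hxc : x = c
    · by_cases hyc : y = c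
      · rw [hxc, hyc]
      · exfalso
        rw [hxc, hUc, hUx y hyc] at hxy
        have := hval y hy hyc
        rw [Set.mem_Icc] at this
        omega
    · by_cases hyc : y = c
      · exfalso
        rw [hyc, hUc, hUx x hxc] at hxy
        have := hval x hx hxc
        rw [Set.mem_Icc] at this
        omega
      · rw [hUx x hxc, hUx y hyc] at hxy
        exact hbij'.injOn (Finset.mem_coe.mpr (hmemE x hx hxc))
          (Finset.mem_coe.mpr (hmemE y hy hyc)) hxy
  · -- surjOn
    intro v hv
    rw [Set.mem_Icc] at hv
    by_cases hvn : v = n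
    · exact ⟨c, Finset.mem_coe.mpr hcmem, by rw [hUc, hvn]⟩
    · have : v ∈ Set.Icc 1 (n - 1) := Set.mem_Icc.mpr ⟨hv.1, by omega⟩
      obtain ⟨x, hx, hxv⟩ := hbij'.surjOn this
      rw [Finset.mem_coe, hE, Finset.mem_erase] at hx
      exact ⟨x, Finset.mem_coe.mpr hx.2, by rw [hUx x hx.1]; exact hxv⟩
  · -- zero outside
    intro x hx
    have hxc : x ≠ c := fun h => hx (h ▸ hcmem)
    rw [hUx x hxc]
    apply hz'
    rw [hE, Finset.mem_erase]
    intro hmem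
    exact hx hmem.2
  · -- rows
    intro i₀ j₁ j₂ h12 m1 m2
    have hne1 : (i₀, j₁) ≠ c := by
      intro h
      -- then i₀ = i, j₁ = rowLen i - 1; j₂ > j₁ and (i₀,j₂) ∈ l gives contradiction
      have hi0 : i₀ = i := congrArg Prod.fst h
      have hj1 : j₁ = l.rowLen i - 1 := congrArg Prod.snd h
      have : j₂ < l.rowLen i₀ := YoungDiagram.mem_iff_lt_rowLen.mp (YoungDiagram.mem_cells _ |>.mp m2)
      have hr : 0 < l.rowLen i := rowLen_pos_iff.mpr (mem_corners.mp hi).1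
      rw [hi0] at this
      omega
    by_cases hne2 : (i₀, j₂) = c
    · rw [hne2, hUc, hUx _ hne1]
      have := hval _ m1 hne1
      rw [Set.mem_Icc] at this
      omega
    · rw [hUx _ hne1, hUx _ hne2]
      exact hrow' i₀ j₁ j₂ h12 (hmemE _ m1 hne1) (hmemE _ m2 hne2)
  · -- cols
    intro i₁ i₂ j h12 m1 m2
    have hne1 : (i₁, j) ≠ c := by
      intro h
      have hi1 : i₁ = i := congrArg Prod.fst h
      have hj : j = l.rowLen i - 1 := congrArg Prod.snd h
      have hlt : j < l.rowLen i₂ := YoungDiagram.mem_iff_lt_rowLen.mp (YoungDiagram.mem_cells _ |>.mp m2)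
      have hanti : l.rowLen i₂ ≤ l.rowLen (i + 1) := l.rowLen_anti _ _ (by omega)
      have hcor := (mem_corners.mp hi).2
      omega
    by_cases hne2 : (i₂, j) = c
    · rw [hne2, hUc, hUx _ hne1]
      have := hval _ m1 hne1
      rw [Set.mem_Icc] at this
      omega
    · rw [hUx _ hne1, hUx _ hne2]
      exact hcol' i₁ i₂ j h12 (hmemE _ m1 hne1) (hmemE _ m2 hne2)


lemma exists_corner_decomp {l : YoungDiagram} (hn : 1 ≤ l.card) {T : ℕ × ℕ → ℕ}
    (hT : IsStdFilling ⊥ l T) :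
    ∃ (i : ℕ) (hi : i ∈ corners l),
      T (i, l.rowLen i - 1) = l.card ∧
      IsStdFilling ⊥ (eraseC l i) (Function.update T (i, l.rowLen i - 1) 0) := by
  classical
  set n := l.card with hnn
  obtain ⟨hbij, hz, hrow, hcol⟩ := (std_bot _ _).mp hT
  obtain ⟨x, hx, hxn⟩ := hbij.surjOn (Set.mem_Icc.mpr ⟨hn, le_refl n⟩ : n ∈ Set.Icc 1 n)
  rw [Finset.mem_coe] at hx
  obtain ⟨i, j⟩ := x
  have hjr : j < l.rowLen i := YoungDiagram.mem_iff_lt_rowLen.mp (YoungDiagram.mem_cells _ |>.mp hx)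
  -- no cell to the right
  have hright : (i, j + 1) ∉ l.cells := by
    intro hmem
    have hlt := hrow i j (j + 1) (by omega) hx hmem
    have := hbij.mapsTo (Finset.mem_coe.mpr hmem)
    rw [Set.mem_Icc] at this
    rw [hxn] at hlt
    omega
  have hbelow : (i + 1, j) ∉ l.cells := by
    intro hmem
    have hlt := hcol i (i + 1) j (by omega) hx hmem
    have := hbij.mapsTo (Finset.mem_coe.mpr hmem)
    rw [Set.mem_Icc] at this
    rw [hxn] at hlt
    omega
  have hrl : l.rowLen i = j + 1 := by
    have h1 : ¬ (j + 1 < l.rowLen i) := fun h =>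
      hright (YoungDiagram.mem_cells _ |>.mpr (YoungDiagram.mem_iff_lt_rowLen.mpr h))
    omega
  have hrow1 : l.rowLen (i + 1) ≤ j := by
    have h1 : ¬ (j < l.rowLen (i + 1)) := fun h =>
      hbelow (YoungDiagram.mem_cells _ |>.mpr (YoungDiagram.mem_iff_lt_rowLen.mpr h))
    omega
  have hi : i ∈ corners l := by
    rw [mem_corners]
    constructor
    · exact rowLen_pos_iff.mp (by omega)
    · omega
  have hcell : (i, l.rowLen i - 1) = ((i, j) : ℕ × ℕ) := by rw [hrl]; simp
  refine ⟨i, hi, by rw [hcell]; exact hxn, ?_⟩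
  -- the restricted filling is standard on the erased diagram
  set c : ℕ × ℕ := (i, l.rowLen i - 1) with hc
  set T' : ℕ × ℕ → ℕ := Function.update T c 0 with hT'def
  have hE := eraseC_cells hi
  have hcardE : (eraseC l i).card = n - 1 := eraseC_card hi
  have hT'x : ∀ x, x ≠ c → T' x = T x := fun x hx => Function.update_of_ne hx 0 T
  have hTc : T c = n := by rw [hcell]; exact hxn
  have hmeml : ∀ y, y ∈ (eraseC l i).cells → y ∈ l.cells ∧ y ≠ c := by
    intro y hy
    rw [hE, Finset.mem_erase] at hy
    exact ⟨hy.2, hy.1⟩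
  have hvalE : ∀ y, y ∈ (eraseC l i).cells → T' y ∈ Set.Icc 1 (n - 1) := by
    intro y hy
    obtain ⟨hyl, hyc⟩ := hmeml y hy
    have h1 := hbij.mapsTo (Finset.mem_coe.mpr hyl)
    have h2 : T y ≠ n := fun h => hyc (hbij.injOn (Finset.mem_coe.mpr hyl)
      (Finset.mem_coe.mpr (hcell ▸ hx)) (by rw [h, hTc]))
    rw [Set.mem_Icc] at h1 ⊢
    rw [hT'x y hyc]
    omega
  rw [std_bot]
  rw [hcardE]
  refine ⟨⟨?_, ?_, ?_⟩, ?_, ?_, ?_⟩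
  · intro y hy
    exact hvalE y (Finset.mem_coe.mp hy)
  · intro y hy z hz hyz
    rw [Finset.mem_coe] at hy hz
    obtain ⟨hyl, hyc⟩ := hmeml y hy
    obtain ⟨hzl, hzc⟩ := hmeml z hz
    rw [hT'x y hyc, hT'x z hzc] at hyz
    exact hbij.injOn (Finset.mem_coe.mpr hyl) (Finset.mem_coe.mpr hzl) hyz
  · intro v hv
    rw [Set.mem_Icc] at hv
    have : v ∈ Set.Icc 1 n := Set.mem_Icc.mpr ⟨hv.1, by omega⟩
    obtain ⟨y, hy, hyv⟩ := hbij.surjOn this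
    rw [Finset.mem_coe] at hy
    have hyc : y ≠ c := by
      intro h
      rw [h, hTc] at hyv
      omega
    refine ⟨y, Finset.mem_coe.mpr ?_, by rw [hT'x y hyc]; exact hyv⟩
    rw [hE, Finset.mem_erase]
    exact ⟨hyc, hy⟩
  · intro y hy
    by_cases hyc : y = c
    · rw [hyc, hT'def]
      exact Function.update_self c 0 T
    · rw [hT'x y hyc]
      apply hz
      intro hyl
      exact hy (by rw [hE, Finset.mem_erase]; exact ⟨hyc, hyl⟩)
  · intro i₀ j₁ j₂ h12 m1 m2
    obtain ⟨m1l, m1c⟩ := hmeml _ m1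
    obtain ⟨m2l, m2c⟩ := hmeml _ m2
    rw [hT'x _ m1c, hT'x _ m2c]
    exact hrow i₀ j₁ j₂ h12 m1l m2l
  · intro i₁ i₂ j' h12 m1 m2
    obtain ⟨m1l, m1c⟩ := hmeml _ m1
    obtain ⟨m2l, m2c⟩ := hmeml _ m2
    rw [hT'x _ m1c, hT'x _ m2c]
    exact hcol i₁ i₂ j' h12 m1l m2l

lemma recurrence (l : YoungDiagram) (hn : 1 ≤ l.card) :
    sytCount ⊥ l = ∑ i ∈ corners l, sytCount ⊥ (eraseC l i) := by
  classical
  set n := l.card with hnn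
  let B : (Σ i : {i // i ∈ corners l}, {T : ℕ × ℕ → ℕ // IsStdFilling ⊥ (eraseC l i.1) T}) →
      {T : ℕ × ℕ → ℕ // IsStdFilling ⊥ l T} := fun p =>
    ⟨Function.update p.2.1 (p.1.1, l.rowLen p.1.1 - 1) n, bwd_std p.1.2 hn p.2.2⟩
  have hvalB : ∀ (p : Σ i : {i // i ∈ corners l},
      {T : ℕ × ℕ → ℕ // IsStdFilling ⊥ (eraseC l i.1) T}) (x : ℕ × ℕ),
      x ≠ (p.1.1, l.rowLen p.1.1 - 1) → (B p).1 x ≠ n := by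
    intro p x hx
    have h1 : (B p).1 x = p.2.1 x := Function.update_of_ne hx n p.2.1
    rw [h1]
    by_cases hxE : x ∈ (eraseC l p.1.1).cells
    · have := p.2.2.1.mapsTo (Finset.mem_coe.mpr (by rw [sdiff_bot]; exact hxE))
      rw [Set.mem_Icc, card_bot, Nat.sub_zero, eraseC_card p.1.2] at this
      omega
    · have h0 := p.2.2.2.1 x (by rw [sdiff_bot]; exact hxE)
      omega
  have hinj : Function.Injective B := by
    intro p q hpq
    have hfun : (B p).1 = (B q).1 := congrArg Subtype.val hpq
    set cp : ℕ × ℕ := (p.1.1, l.rowLen p.1.1 - 1) with hcp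
    set cq : ℕ × ℕ := (q.1.1, l.rowLen q.1.1 - 1) with hcq
    have hBp : (B p).1 cp = n := Function.update_self cp n p.2.1
    have hcpq : cp = cq := by
      by_contra hne
      have := hvalB q cp (by rw [← hcq]; exact hne)
      rw [← hfun] at this
      exact this hBp
    have hij : p.1.1 = q.1.1 := congrArg Prod.fst hcpq
    have hieq : p.1 = q.1 := Subtype.ext hij
    obtain ⟨pi, pT⟩ := p
    obtain ⟨qi, qT⟩ := q
    simp only at hieq
    subst hieq
    simp only [Sigma.mk.inj_iff, heq_eq_eq]
    refine ⟨trivial, Subtype.ext ?_⟩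
    funext x
    by_cases hxc : x = cp
    · have h1 : pT.1 cp = 0 := pT.2.2.1 cp (by
        rw [sdiff_bot, eraseC_cells pi.2]
        exact Finset.notMem_erase _ _)
      have h2 : qT.1 cp = 0 := qT.2.2.1 cp (by
        rw [sdiff_bot, eraseC_cells pi.2]
        exact Finset.notMem_erase _ _)
      rw [hxc, h1, h2]
    · have h1 : pT.1 x = (B ⟨pi, pT⟩).1 x := (Function.update_of_ne hxc n pT.1).symm
      have h2 : qT.1 x = (B ⟨pi, qT⟩).1 x := (Function.update_of_ne hxc n qT.1).symm
      rw [h1, h2, hfun]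
  have hsurj : Function.Surjective B := by
    intro T
    obtain ⟨i, hi, hTc, hstd⟩ := exists_corner_decomp hn T.2
    refine ⟨⟨⟨i, hi⟩, ⟨Function.update T.1 (i, l.rowLen i - 1) 0, hstd⟩⟩, ?_⟩
    apply Subtype.ext
    show Function.update (Function.update T.1 (i, l.rowLen i - 1) 0) (i, l.rowLen i - 1) n = T.1
    have hTc' : T.1 (i, l.rowLen i - 1) = n := hTc
    rw [Function.update_idem, ← hTc']
    exact Function.update_eq_self _ _
  have hcongr := Nat.card_congr (Equiv.ofBijective B ⟨hinj, hsurj⟩)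
  rw [sytCount, ← hcongr]
  have hft : ∀ i : {i // i ∈ corners l}, Fintype {T : ℕ × ℕ → ℕ // IsStdFilling ⊥ (eraseC l i.1) T} :=
    fun i => Fintype.ofFinite _
  rw [Nat.card_eq_fintype_card, Fintype.card_sigma]
  rw [show (∑ i ∈ corners l, sytCount ⊥ (eraseC l i))
      = ∑ i ∈ (corners l).attach, sytCount ⊥ (eraseC l i.1) from (Finset.sum_attach _ _).symm]
  rw [Finset.univ_eq_attach]
  refine Finset.sum_congr rfl fun i _ => ?_
  rw [sytCount, Nat.card_eq_fintype_card]

lemma prod_Ioo_sub (i : ℕ) : ∀ k, ∏ m ∈ Ioo i k, (m - i) = (k - 1 - i)! := by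
  intro k
  induction k with
  | zero => simp
  | succ k ih =>
    rcases Nat.lt_or_ge i k with h | h
    · have hins : Ioo i (k + 1) = insert k (Ioo i k) := by
        ext m; simp only [Finset.mem_Ioo, Finset.mem_insert]; omega
      have hknm : k ∉ Ioo i k := by simp [Finset.mem_Ioo]
      rw [hins, Finset.prod_insert hknm, ih]
      have h1 : k + 1 - 1 - i = (k - 1 - i) + 1 := by omega
      have h2 : k - i = k - 1 - i + 1 := by omega
      rw [h1, Nat.factorial_succ, h2]
    · have he : Ioo i (k + 1) = ∅ := by
        ext m; simp only [Finset.mem_Ioo, Finset.notMem_empty, iff_false]; omega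
      have h0 : k + 1 - 1 - i = 0 := by omega
      rw [he, Finset.prod_empty, h0]
      rfl

lemma Dn_cast (l : YoungDiagram) (k : ℕ) :
    ((∏ i ∈ range k, ∏ m ∈ Ioo i k, (beta l k i - beta l k m) : ℕ) : ℚ)
      = Dq (fun j => ((beta l k j : ℕ) : ℚ)) k := by
  rw [Dq_eq_nested, Nat.cast_prod]
  refine Finset.prod_congr rfl fun i hi => ?_
  rw [Nat.cast_prod]
  refine Finset.prod_congr rfl fun m hm => ?_
  rw [Finset.mem_Ioo] at hm
  rw [Nat.cast_sub (beta_strict (l := l) hm.1 hm.2).le]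

lemma cells_biUnion (l : YoungDiagram) {k : ℕ} (hk : l.colLen 0 ≤ k) :
    l.cells = (range k).biUnion (fun i => l.row i) := by
  ext c
  simp only [Finset.mem_biUnion, Finset.mem_range, YoungDiagram.mem_row_iff]
  constructor
  · intro hc
    have hm : (c.1, c.2) ∈ l := by rw [YoungDiagram.mem_cells] at hc; exact hc
    have h1 : 0 < l.rowLen c.1 := by
      have := YoungDiagram.mem_iff_lt_rowLen.mp hm; omega
    have h2 := rowLen_pos_iff.mp h1
    exact ⟨c.1, by omega, hc, rfl⟩
  · rintro ⟨i, _, hc, rfl⟩; exact hc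

lemma hook_prod_total (l : YoungDiagram) {k : ℕ} (hk : l.colLen 0 ≤ k) :
    (∏ c ∈ l.cells, hookLength l c) *
      ∏ i ∈ range k, ∏ m ∈ Ioo i k, (beta l k i - beta l k m)
      = ∏ i ∈ range k, (beta l k i)! := by
  classical
  have h1 : ∏ c ∈ l.cells, hookLength l c
      = ∏ i ∈ range k, ∏ j ∈ range (l.rowLen i), hookLength l (i, j) := by
    rw [cells_biUnion l hk, Finset.prod_biUnion]
    · refine Finset.prod_congr rfl fun i _ => ?_
      rw [YoungDiagram.row_eq_prod, Finset.prod_product]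
      simp
    · intro a _ b _ hab
      intro u hua hub c hc
      have ha := (YoungDiagram.mem_row_iff.mp (hua hc)).2
      have hb := (YoungDiagram.mem_row_iff.mp (hub hc)).2
      exact absurd (ha ▸ hb) hab
  rw [h1, ← Finset.prod_mul_distrib]
  exact Finset.prod_congr rfl fun i hi => row_hook_prod l hk (Finset.mem_range.mp hi)

lemma colLen_zero_of_card_zero {l : YoungDiagram} (h : l.card = 0) : l.colLen 0 = 0 := by
  by_contra hc
  have h0 : (0, 0) ∈ l := YoungDiagram.mem_iff_lt_colLen.mpr (Nat.pos_of_ne_zero hc)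
  have : (0, 0) ∈ l.cells := (YoungDiagram.mem_cells _).mpr h0
  have := Finset.card_pos.mpr ⟨_, this⟩
  rw [YoungDiagram.card] at h
  omega

lemma beta_injOn {l : YoungDiagram} {k : ℕ} :
    Set.InjOn (fun j => ((beta l k j : ℕ) : ℚ)) (range k) := by
  intro a ha b hb hab
  simp only [Finset.coe_range, Set.mem_Iio] at ha hb
  simp only [Nat.cast_inj] at hab
  rcases lt_trichotomy a b with h | h | h
  · exact absurd hab (Nat.ne_of_gt (beta_strict h hb))
  · exact h
  · exact absurd hab (Nat.ne_of_lt (beta_strict h ha))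

lemma Dq_beta_ne {l : YoungDiagram} {k : ℕ} :
    Dq (fun j => ((beta l k j : ℕ) : ℚ)) k ≠ 0 := by
  rw [Dq, Finset.prod_ne_zero_iff]
  intro p hp
  rw [mem_TT] at hp
  have := beta_strict (l := l) hp.1 hp.2
  intro hc
  rw [sub_eq_zero, Nat.cast_inj] at hc
  omega

lemma gauss_cast {k : ℕ} (hk : 1 ≤ k) :
    ((∑ i ∈ range k, i : ℕ) : ℚ) = (k : ℚ) * ((k : ℚ) - 1) / 2 := by
  have h := Finset.sum_range_id_mul_two k
  have h2 : ((∑ i ∈ range k, i : ℕ) : ℚ) * 2 = (k : ℚ) * ((k : ℚ) - 1) := by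
    have := congrArg (fun m : ℕ => (m : ℚ)) h
    push_cast [Nat.cast_sub hk] at this
    push_cast
    linarith [this]
  linarith

lemma countB : ∀ (n : ℕ) (l : YoungDiagram), l.card = n → ∀ k, l.colLen 0 ≤ k →
    (sytCount ⊥ l : ℚ) * ∏ i ∈ range k, (((beta l k i)! : ℕ) : ℚ)
      = ((n ! : ℕ) : ℚ) * Dq (fun j => ((beta l k j : ℕ) : ℚ)) k := by
  intro n
  induction n with
  | zero =>
    intro l hcard k hk
    have hr : ∀ i, l.rowLen i = 0 := fun i =>
      rowLen_eq_zero (by rw [colLen_zero_of_card_zero hcard]; omega)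
    have hb : ∀ i, beta l k i = k - 1 - i := fun i => by unfold beta; rw [hr i]; omega
    rw [sytCount_card_zero hcard, ← Dn_cast]
    have hN : ∏ i ∈ range k, ∏ m ∈ Ioo i k, (beta l k i - beta l k m)
        = ∏ i ∈ range k, (beta l k i)! := by
      refine Finset.prod_congr rfl fun i hi => ?_
      rw [Finset.mem_range] at hi
      have h1 : ∏ m ∈ Ioo i k, (beta l k i - beta l k m) = ∏ m ∈ Ioo i k, (m - i) := by
        refine Finset.prod_congr rfl fun m hm => ?_
        rw [Finset.mem_Ioo] at hm
        rw [hb i, hb m]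
        omega
      rw [h1, prod_Ioo_sub, hb i]
    rw [hN, Nat.cast_prod]
    norm_num
  | succ n ih =>
    intro l hcard k hk
    have hn1 : 1 ≤ l.card := by omega
    have hcol1 : 1 ≤ l.colLen 0 := by
      by_contra h
      have : l.colLen 0 = 0 := by omega
      have hr : ∀ i, l.rowLen i = 0 := fun i => rowLen_eq_zero (by omega)
      have h2 := card_eq_sum_rowLen l (k := l.colLen 0) (le_refl _)
      rw [Finset.sum_congr rfl (fun i _ => hr i), Finset.sum_const, smul_zero] at h2
      omega
    have hk1 : 1 ≤ k := le_trans hcol1 hk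
    set x : ℕ → ℚ := fun j => ((beta l k j : ℕ) : ℚ) with hx
    have hxinj : Set.InjOn x (range k) := beta_injOn
    have hcornersub : corners l ⊆ range k := fun i hi =>
      Finset.mem_range.mpr (lt_of_lt_of_le (mem_corners.mp hi).1 hk)
    have hbetaE : ∀ i ∈ corners l, ∀ j, j ≠ i → beta (eraseC l i) k j = beta l k j := by
      intro i hi j hj
      unfold beta
      rw [eraseC_rowLen_ne hi hj]
    have hbetaEi : ∀ i ∈ corners l, beta (eraseC l i) k i = beta l k i - 1 := by
      intro i hi
      have hpos : 0 < l.rowLen i := rowLen_pos_iff.mpr (mem_corners.mp hi).1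
      unfold beta
      rw [eraseC_rowLen_self hi]
      omega
    have hbpos : ∀ i ∈ corners l, 1 ≤ beta l k i := by
      intro i hi
      have hpos : 0 < l.rowLen i := rowLen_pos_iff.mpr (mem_corners.mp hi).1
      unfold beta
      omega
    have hcorner_beta : ∀ i ∈ corners l,
        (fun j => ((beta (eraseC l i) k j : ℕ) : ℚ)) = Function.update x i (x i - 1) := by
      intro i hi
      funext j
      by_cases hj : j = i
      · subst hj
        rw [Function.update_self, hbetaEi j hi, Nat.cast_sub (hbpos j hi), hx]
        norm_num
      · rw [Function.update_of_ne hj, hbetaE i hi j hj]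
    have hterm : ∀ i ∈ corners l,
        (sytCount ⊥ (eraseC l i) : ℚ) * ∏ j ∈ range k, (((beta l k j)! : ℕ) : ℚ)
          = ((n ! : ℕ) : ℚ) * (x i * Dq (Function.update x i (x i - 1)) k) := by
      intro i hi
      have hEcard : (eraseC l i).card = n := by rw [eraseC_card hi]; omega
      have hEcol : (eraseC l i).colLen 0 ≤ k := le_trans (eraseC_colLen hi) hk
      have hIH := ih (eraseC l i) hEcard k hEcol
      rw [hcorner_beta i hi] at hIH
      have hik : i ∈ range k := hcornersub hi
      have hfact : ∏ j ∈ range k, (((beta l k j)! : ℕ) : ℚ)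
          = x i * ∏ j ∈ range k, (((beta (eraseC l i) k j)! : ℕ) : ℚ) := by
        rw [← Finset.mul_prod_erase (range k) _ hik,
          ← Finset.mul_prod_erase (range k) (fun j => (((beta (eraseC l i) k j)! : ℕ) : ℚ)) hik]
        have he : ∏ j ∈ (range k).erase i, (((beta (eraseC l i) k j)! : ℕ) : ℚ)
            = ∏ j ∈ (range k).erase i, (((beta l k j)! : ℕ) : ℚ) := by
          refine Finset.prod_congr rfl fun j hj => ?_
          rw [hbetaE i hi j (Finset.mem_erase.mp hj).1]
        rw [he, hbetaEi i hi, ← mul_assoc]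
        congr 1
        rw [show (beta l k i)! = beta l k i * (beta l k i - 1)! from
          (Nat.mul_factorial_pred (Nat.one_le_iff_ne_zero.mp (hbpos i hi))).symm]
        push_cast
        ring
      rw [hfact, ← mul_assoc, mul_comm ((sytCount ⊥ (eraseC l i) : ℚ)) (x i), mul_assoc, hIH]
      ring
    have hzero : ∀ i ∈ range k, i ∉ corners l →
        x i * Dq (Function.update x i (x i - 1)) k = 0 := by
      intro i hir hic
      rw [Finset.mem_range] at hir
      rcases Nat.lt_or_ge (i + 1) k with hik1 | hik1
      · -- rowLen (i+1) = rowLen i, so updated x has a repeated value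
        have hreq : l.rowLen (i + 1) = l.rowLen i := by
          rcases Nat.lt_or_ge i (l.colLen 0) with h1 | h1
          · have : ¬ l.rowLen (i + 1) < l.rowLen i := fun h =>
              hic (mem_corners.mpr ⟨h1, h⟩)
            have := l.rowLen_anti i (i + 1) (by omega)
            omega
          · rw [rowLen_eq_zero (show l.colLen 0 ≤ i + 1 by omega),
              rowLen_eq_zero (show l.colLen 0 ≤ i by omega)]
        have hbeq : beta l k i = beta l k (i + 1) + 1 := by
          unfold beta
          rw [hreq]
          omega
        have hfac : Function.update x i (x i - 1) i - Function.update x i (x i - 1) (i + 1) = 0 := by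
          rw [Function.update_self, Function.update_of_ne (by omega : i + 1 ≠ i), hx]
          simp only
          rw [hbeq]
          push_cast
          ring
        have hmem : ((i, i + 1) : ℕ × ℕ) ∈ TT k := mem_TT.mpr ⟨by omega, hik1⟩
        rw [Dq, Finset.prod_eq_zero hmem hfac, mul_zero]
      · -- i = k - 1 and x i = 0
        have hie : i = k - 1 := by omega
        have hicol : l.colLen 0 ≤ i := by
          by_contra h
          rw [not_le] at h
          apply hic
          rw [mem_corners]
          refine ⟨h, ?_⟩
          have h1 : l.rowLen (i + 1) = 0 := rowLen_eq_zero (by omega)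
          have h2 : 0 < l.rowLen i := rowLen_pos_iff.mpr h
          omega
        have : beta l k i = 0 := by
          unfold beta
          rw [rowLen_eq_zero hicol]
          omega
        rw [hx]
        simp only
        rw [this]
        norm_num
    have hrecQ : (sytCount ⊥ l : ℚ) = ∑ i ∈ corners l, (sytCount ⊥ (eraseC l i) : ℚ) := by
      rw [recurrence l hn1]
      push_cast
      rfl
    have hsum : ∑ i ∈ range k, beta l k i = (n + 1) + ∑ i ∈ range k, i := by
      unfold beta
      rw [Finset.sum_add_distrib, ← card_eq_sum_rowLen l hk, hcard]
      congr 1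
      exact Finset.sum_range_reflect (fun i => i) k
    have hsumx : ∑ i ∈ range k, x i = (n + 1 : ℚ) + (k : ℚ) * ((k : ℚ) - 1) / 2 := by
      rw [hx]
      simp only
      rw [← Nat.cast_sum, hsum]
      push_cast [gauss_cast hk1]
      ring
    calc (sytCount ⊥ l : ℚ) * ∏ i ∈ range k, (((beta l k i)! : ℕ) : ℚ)
        = ∑ i ∈ corners l, (sytCount ⊥ (eraseC l i) : ℚ)
            * ∏ j ∈ range k, (((beta l k j)! : ℕ) : ℚ) := by
          rw [hrecQ, Finset.sum_mul]
      _ = ∑ i ∈ corners l, ((n ! : ℕ) : ℚ) * (x i * Dq (Function.update x i (x i - 1)) k) :=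
          Finset.sum_congr rfl hterm
      _ = ((n ! : ℕ) : ℚ) * ∑ i ∈ corners l, x i * Dq (Function.update x i (x i - 1)) k := by
          rw [Finset.mul_sum]
      _ = ((n ! : ℕ) : ℚ) * ∑ i ∈ range k, x i * Dq (Function.update x i (x i - 1)) k := by
          congr 1
          exact Finset.sum_subset hcornersub (fun i h1 h2 => hzero i h1 h2)
      _ = ((n ! : ℕ) : ℚ) * (((∑ i ∈ range k, x i) - (k : ℚ) * ((k : ℚ) - 1) / 2) * Dq x k) := by
          rw [main_identity hxinj]
      _ = (((n + 1)! : ℕ) : ℚ) * Dq x k := by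
          rw [hsumx, Nat.factorial_succ]
          push_cast
          ring

end HLF

/-- The hook length formula: for any partition `l ⊢ n`, the number of standard Young
tableaux of shape `l` equals `n!` divided by the product of the hook lengths:
`f^l = n! / ∏_{(i,j) ∈ l} h_l(i,j)`. -/
theorem stmt12 (l : YoungDiagram) :
    sytCount ⊥ l * ∏ c ∈ l.cells, hookLength l c = Nat.factorial l.card := by
  classical
  set k := l.colLen 0 with hkdef
  have hk : l.colLen 0 ≤ k := le_refl _
  have hA := HLF.hook_prod_total l hk
  have hB := HLF.countB l.card l rfl k hk
  set x : ℕ → ℚ := fun j => ((HLF.beta l k j : ℕ) : ℚ) with hx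
  have hDne : HLF.Dq x k ≠ 0 := HLF.Dq_beta_ne
  have hA' : ((∏ c ∈ l.cells, hookLength l c : ℕ) : ℚ) * HLF.Dq x k
      = ∏ i ∈ Finset.range k, (((HLF.beta l k i)! : ℕ) : ℚ) := by
    rw [← HLF.Dn_cast, ← Nat.cast_mul, hA, Nat.cast_prod]
  have hmain : ((sytCount ⊥ l * ∏ c ∈ l.cells, hookLength l c : ℕ) : ℚ) * HLF.Dq x k
      = ((Nat.factorial l.card : ℕ) : ℚ) * HLF.Dq x k := by
    push_cast
    calc (sytCount ⊥ l : ℚ) * (∏ c ∈ l.cells, (hookLength l c : ℚ)) * HLF.Dq x k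
        = (sytCount ⊥ l : ℚ) * ((∏ c ∈ l.cells, (hookLength l c : ℚ)) * HLF.Dq x k) := by ring
      _ = (sytCount ⊥ l : ℚ) * ∏ i ∈ Finset.range k, (((HLF.beta l k i)! : ℕ) : ℚ) := by
          rw [← hA']
          push_cast
          ring
      _ = ((l.card ! : ℕ) : ℚ) * HLF.Dq x k := hB
      _ = (l.card ! : ℚ) * HLF.Dq x k := by push_cast; ring
  have := mul_right_cancel₀ hDne hmain
  exact_mod_cast this
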